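/- arXiv:2604.25841 — 4 statements merged into one kernel-verified Lean document; each statement's English description precedes it below -/
import Mathlib

section
/- Let G be the graph consisting of C vertex-disjoint paths of length 3 between distinct vertices u and v (an F'-gadget). Then mcut(G) = 3C; every bipartition placing u and v on the same side crosses at most 2C edges; and every bipartition placing u and v on different sides extends to one crossing all 3C edges. -/
/-- Indicator of a crossing edge between two sides. -/
def cross (a b : Bool) : ℕ := if a ≠ b then 1 else 0

/-- Cut size of a bipartition of the F'-gadget `F'(u,v)`: vertices are
`Sum.inl (i, false)` and `Sum.inl (i, true)` (the two internal vertices of the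
`i`-th path of length 3), `Sum.inr false = u` and `Sum.inr true = v`; the `i`-th
path is `u — (i,false) — (i,true) — v`. -/
def F'cut (C : ℕ) (f : (Fin C × Bool) ⊕ Bool → Bool) : ℕ :=
  ∑ i : Fin C,
    (cross (f (Sum.inr false)) (f (Sum.inl (i, false))) +
     cross (f (Sum.inl (i, false))) (f (Sum.inl (i, true))) +
     cross (f (Sum.inl (i, true))) (f (Sum.inr true)))

lemma path_le3 (a x y b : Bool) : cross a x + cross x y + cross y b ≤ 3 := by
  simp only [cross]; cases a <;> cases x <;> cases y <;> cases b <;> decide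

lemma path_le2 (a x y : Bool) : cross a x + cross x y + cross y a ≤ 2 := by
  simp only [cross]; cases a <;> cases x <;> cases y <;> decide

lemma path_eq3 (a b : Bool) (h : a ≠ b) : cross a (!a) + cross (!a) a + cross a b = 3 := by
  simp only [cross]; cases a <;> cases b <;> simp_all

/-- `mcut(F') = 3C`; any bipartition with `u,v` on the same side crosses at most `2C`
edges; and any placement of `u` and `v` on different sides extends to a bipartition
crossing all `3C` edges. -/
theorem stmt6 (C : ℕ) :
    (∀ f : (Fin C × Bool) ⊕ Bool → Bool, F'cut C f ≤ 3 * C) ∧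
    (∃ f : (Fin C × Bool) ⊕ Bool → Bool, F'cut C f = 3 * C) ∧
    (∀ f : (Fin C × Bool) ⊕ Bool → Bool,
      f (Sum.inr false) = f (Sum.inr true) → F'cut C f ≤ 2 * C) ∧
    (∀ b₁ b₂ : Bool, b₁ ≠ b₂ →
      ∃ f : (Fin C × Bool) ⊕ Bool → Bool,
        f (Sum.inr false) = b₁ ∧ f (Sum.inr true) = b₂ ∧ F'cut C f = 3 * C) := by
  have key : ∀ b₁ b₂ : Bool, b₁ ≠ b₂ →
      ∃ f : (Fin C × Bool) ⊕ Bool → Bool,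
        f (Sum.inr false) = b₁ ∧ f (Sum.inr true) = b₂ ∧ F'cut C f = 3 * C := by
    intro b₁ b₂ h
    refine ⟨fun z => match z with
      | Sum.inl (_, b) => if b then b₁ else !b₁
      | Sum.inr b => if b then b₂ else b₁, rfl, rfl, ?_⟩
    simp [F'cut, path_eq3 b₁ b₂ h, mul_comm]
  refine ⟨?_, ?_, ?_, key⟩
  · intro f
    calc F'cut C f ≤ ∑ _i : Fin C, 3 := Finset.sum_le_sum fun i _ => path_le3 _ _ _ _
    _ = 3 * C := by simp [mul_comm]
  · obtain ⟨f, _, _, hf⟩ := key false true (by simp); exact ⟨f, hf⟩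
  · intro f h
    calc F'cut C f ≤ ∑ _i : Fin C, 2 := by
          refine Finset.sum_le_sum fun i _ => ?_
          rw [h]; exact path_le2 _ _ _
    _ = 2 * C := by simp [mul_comm]
end

section
/- A graph Q ⊆ E(G) is an edge dominating set of a graph G of size at most ℓ if and only if there exists a pair (S, M) where S is a vertex cover of G, M is a matching in G with all endpoints of M contained in S, and |M| + |S \ V(M)| ≤ ℓ. -/
/-- A graph `G` admits an edge dominating set of size at most `ℓ` (a set `Q` of edges
such that every edge of `G` shares an endpoint with an edge of `Q`) if and only if
there is a pair `(S, M)` where `S` is a vertex cover of `G`, `M` is a matching in `G`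
all of whose endpoints lie in `S`, and `|M| + |S \ V(M)| ≤ ℓ`. -/
theorem stmt10 (V : Type) [Fintype V] [DecidableEq V] (G : SimpleGraph V)
    [DecidableRel G.Adj] (ℓ : ℕ) :
    (∃ Q : Finset (Sym2 V), ↑Q ⊆ G.edgeSet ∧ Q.card ≤ ℓ ∧
      ∀ e ∈ G.edgeSet, ∃ f ∈ Q, ∃ v : V, v ∈ e ∧ v ∈ f) ↔
    (∃ (S : Finset V) (M : Finset (Sym2 V)),
      (∀ e ∈ G.edgeSet, ∃ v ∈ S, v ∈ e) ∧
      ↑M ⊆ G.edgeSet ∧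
      (∀ e ∈ M, ∀ f ∈ M, e ≠ f → ∀ v : V, v ∈ e → v ∉ f) ∧
      (∀ e ∈ M, ∀ v : V, v ∈ e → v ∈ S) ∧
      M.card + (S \ Finset.univ.filter (fun v => ∃ e ∈ M, v ∈ e)).card ≤ ℓ) := by
  classical
  constructor
  · rintro ⟨Q, hQsub, hQcard, hQdom⟩
    set P : Finset (Sym2 V) → Prop :=
      fun M => ∀ e ∈ M, ∀ f ∈ M, e ≠ f → ∀ v : V, v ∈ e → v ∉ f with hP
    have h0 : (∅ : Finset (Sym2 V)) ∈ Q.powerset.filter P := by simp [hP]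
    obtain ⟨M, hMmem, hMmax⟩ :=
      Finset.exists_max_image (Q.powerset.filter P) Finset.card ⟨∅, h0⟩
    rw [Finset.mem_filter, Finset.mem_powerset] at hMmem
    obtain ⟨hMQ, hMmatch⟩ := hMmem
    set S : Finset V := Finset.univ.filter (fun v => ∃ e ∈ Q, v ∈ e) with hS
    set VM : Finset V := Finset.univ.filter (fun v => ∃ e ∈ M, v ∈ e) with hVM
    refine ⟨S, M, ?_, ?_, hMmatch, ?_, ?_⟩
    · intro e he
      obtain ⟨f, hf, v, hve, hvf⟩ := hQdom e he
      exact ⟨v, by simp [hS]; exact ⟨f, hf, hvf⟩, hve⟩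
    · exact fun e he => hQsub (hMQ he)
    · intro e he v hv
      simp [hS]
      exact ⟨e, hMQ he, hv⟩
    · -- key cardinality bound
      set F : V → Sym2 V :=
        fun v => if h : ∃ e ∈ Q, v ∈ e then h.choose else Sym2.diag v with hF
      have hFmem : ∀ v ∈ S \ VM, F v ∈ Q \ M := by
        intro v hv
        rw [Finset.mem_sdiff] at hv
        obtain ⟨hvS, hvVM⟩ := hv
        rw [hS, Finset.mem_filter] at hvS
        have h : ∃ e ∈ Q, v ∈ e := hvS.2
        have hFv : F v = h.choose := dif_pos h
        obtain ⟨hQm, hvm⟩ := h.choose_spec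
        rw [Finset.mem_sdiff]
        refine ⟨hFv ▸ hQm, ?_⟩
        intro hFM
        apply hvVM
        rw [hVM, Finset.mem_filter]
        exact ⟨Finset.mem_univ v, F v, hFM, hFv ▸ hvm⟩
      have hvF : ∀ v ∈ S \ VM, v ∈ F v ∧ ¬ ∃ f ∈ M, v ∈ f := by
        intro v hv
        rw [Finset.mem_sdiff] at hv
        obtain ⟨hvS, hvVM⟩ := hv
        rw [hS, Finset.mem_filter] at hvS
        have h : ∃ e ∈ Q, v ∈ e := hvS.2
        have hFv : F v = h.choose := dif_pos h
        refine ⟨hFv ▸ h.choose_spec.2, ?_⟩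
        intro ⟨f, hf, hvf⟩
        apply hvVM
        rw [hVM, Finset.mem_filter]
        exact ⟨Finset.mem_univ v, f, hf, hvf⟩
      have hinj : Set.InjOn F (S \ VM : Finset V) := by
        intro v hv w hw hvw
        by_contra hne
        have hv' := hvF v hv
        have hw' := hvF w hw
        have hvm := hFmem v hv
        rw [Finset.mem_sdiff] at hvm
        have heq : F v = s(v, w) := by
          rw [← Sym2.mem_and_mem_iff hne]
          exact ⟨hv'.1, hvw ▸ hw'.1⟩
        -- insert (F v) M is a bigger matching inside Q, contradiction
        have hFnM : F v ∉ M := hvm.2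
        have hins : insert (F v) M ∈ Q.powerset.filter P := by
          rw [Finset.mem_filter, Finset.mem_powerset]
          constructor
          · intro x hx
            rw [Finset.mem_insert] at hx
            rcases hx with rfl | hx
            · exact hvm.1
            · exact hMQ hx
          · intro a ha b hb hab u hua
            rw [Finset.mem_insert] at ha hb
            rcases ha with rfl | ha <;> rcases hb with rfl | hb
            · exact absurd rfl hab
            · -- a = F v, b ∈ M
              rw [heq, Sym2.mem_iff] at hua
              rcases hua with rfl | rfl
              · exact fun hub => hv'.2 ⟨b, hb, hub⟩
              · exact fun hub => hw'.2 ⟨b, hb, hub⟩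
            · -- a ∈ M, b = F v
              intro hub
              rw [heq, Sym2.mem_iff] at hub
              rcases hub with rfl | rfl
              · exact hv'.2 ⟨a, ha, hua⟩
              · exact hw'.2 ⟨a, ha, hua⟩
            · exact hMmatch a ha b hb hab u hua
        have := hMmax _ hins
        rw [Finset.card_insert_of_notMem hFnM] at this
        omega
      have hcard1 : (S \ VM).card ≤ (Q \ M).card := by
        apply Finset.card_le_card_of_injOn F
        · intro v hv; exact hFmem v hv
        · exact hinj
      have hcard2 : (Q \ M).card + M.card = Q.card :=
        Finset.card_sdiff_add_card_eq_card hMQ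
      have hVM' : (S \ Finset.univ.filter (fun v => ∃ e ∈ M, v ∈ e)).card
          = (S \ VM).card := by
        simp only [hVM, Finset.filter_congr_decidable]
      rw [hVM']
      omega
  · rintro ⟨S, M, hcover, hMsub, hmatch, hMS, hcard⟩
    set VM : Finset V := Finset.univ.filter (fun v => ∃ e ∈ M, v ∈ e) with hVM
    set g : V → Sym2 V :=
      fun v => if h : ∃ e ∈ G.edgeSet, v ∈ e then h.choose else Sym2.diag v with hg
    set T : Finset V := (S \ VM).filter (fun v => ∃ e ∈ G.edgeSet, v ∈ e) with hT
    refine ⟨M ∪ T.image g, ?_, ?_, ?_⟩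
    · intro e he
      rw [Finset.coe_union, Set.mem_union] at he
      rcases he with he | he
      · exact hMsub he
      · rw [Finset.coe_image, Set.mem_image] at he
        obtain ⟨v, hv, rfl⟩ := he
        rw [hT, Finset.coe_filter, Set.mem_setOf] at hv
        have h : ∃ e ∈ G.edgeSet, v ∈ e := hv.2
        have : g v = h.choose := dif_pos h
        exact this ▸ h.choose_spec.1
    · calc (M ∪ T.image g).card ≤ M.card + (T.image g).card := Finset.card_union_le _ _
        _ ≤ M.card + T.card := by gcongr; exact Finset.card_image_le
        _ ≤ M.card + (S \ VM).card := by gcongr; exact Finset.filter_subset _ _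
        _ ≤ ℓ := hcard
    · intro e he
      obtain ⟨v, hvS, hve⟩ := hcover e he
      by_cases hv : ∃ f ∈ M, v ∈ f
      · obtain ⟨f, hf, hvf⟩ := hv
        exact ⟨f, Finset.mem_union_left _ hf, v, hve, hvf⟩
      · have hvT : v ∈ T := by
          rw [hT, Finset.mem_filter, Finset.mem_sdiff]
          refine ⟨⟨hvS, ?_⟩, e, he, hve⟩
          rw [hVM, Finset.mem_filter]
          rintro ⟨-, hh⟩
          exact hv hh
        have h : ∃ e ∈ G.edgeSet, v ∈ e := ⟨e, he, hve⟩
        have hgv : g v = h.choose := dif_pos h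
        exact ⟨g v, Finset.mem_union_right _ (Finset.mem_image_of_mem g hvT),
          v, hve, hgv ▸ h.choose_spec.2⟩
end

section
/- Let Q be an inclusion-minimal edge dominating set of a graph G. Then the subgraph induced by the edge set Q is a vertex-disjoint union of stars, i.e., it contains no path on 4 vertices and no cycle. -/
private lemma walk_end_mem_edge {V : Type} {G : SimpleGraph V} :
    ∀ {x y : V} (w : G.Walk x y), x ≠ y → ∃ e ∈ w.edges, y ∈ e := by
  intro x y w
  induction w with
  | nil => intro h; exact absurd rfl h
  | @cons x z y h w ih =>
    intro _
    by_cases hzy : z = y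
    · subst hzy
      exact ⟨s(x, z), by simp, by simp⟩
    · obtain ⟨e, he, hye⟩ := ih hzy
      exact ⟨e, by simp [he], hye⟩

private lemma key {V : Type} [Fintype V] [DecidableEq V] {G : SimpleGraph V}
    {Q : Finset (Sym2 V)}
    (hdom : ∀ e ∈ G.edgeSet, ∃ f ∈ Q, ∃ v : V, v ∈ e ∧ v ∈ f)
    (hmin : ∀ Q' ⊂ Q, ¬ (∀ e ∈ G.edgeSet, ∃ f ∈ Q', ∃ v : V, v ∈ e ∧ v ∈ f))
    {u v : V} (hf : s(u, v) ∈ Q)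
    {g h : Sym2 V} (hg : g ∈ Q) (hgf : g ≠ s(u, v)) (hug : u ∈ g)
    (hh : h ∈ Q) (hhf : h ≠ s(u, v)) (hvh : v ∈ h) : False := by
  have hss : Q.erase s(u, v) ⊂ Q := Finset.erase_ssubset hf
  have := hmin _ hss
  push_neg at this
  obtain ⟨e, he, hpriv⟩ := this
  obtain ⟨f'', hf'', w, hwe, hwf⟩ := hdom e he
  have hfe : f'' = s(u, v) := by
    by_contra hne
    exact hpriv f'' (Finset.mem_erase.2 ⟨hne, hf''⟩) w hwe hwf
  subst hfe
  rcases Sym2.mem_iff.1 hwf with rfl | rfl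
  · exact hpriv g (Finset.mem_erase.2 ⟨hgf, hg⟩) w hwe hug
  · exact hpriv h (Finset.mem_erase.2 ⟨hhf, hh⟩) w hwe hvh

/-- Let `Q` be an inclusion-minimal edge dominating set of a graph `G`. Then the
subgraph induced by the edge set `Q` is a vertex-disjoint union of stars: it contains
no path on 4 vertices and no cycle. -/
theorem stmt11 (V : Type) [Fintype V] [DecidableEq V] (G : SimpleGraph V)
    (Q : Finset (Sym2 V)) (hsub : ↑Q ⊆ G.edgeSet)
    (hdom : ∀ e ∈ G.edgeSet, ∃ f ∈ Q, ∃ v : V, v ∈ e ∧ v ∈ f)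
    (hmin : ∀ Q' ⊂ Q, ¬ (∀ e ∈ G.edgeSet, ∃ f ∈ Q', ∃ v : V, v ∈ e ∧ v ∈ f)) :
    (¬ ∃ a b c d : V, a ≠ b ∧ a ≠ c ∧ a ≠ d ∧ b ≠ c ∧ b ≠ d ∧ c ≠ d ∧
      s(a, b) ∈ Q ∧ s(b, c) ∈ Q ∧ s(c, d) ∈ Q) ∧
    (SimpleGraph.fromEdgeSet (↑Q : Set (Sym2 V))).IsAcyclic := by
  constructor
  · rintro ⟨a, b, c, d, hab, hac, had, hbc, hbd, hcd, h1, h2, h3⟩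
    have hne1 : s(a, b) ≠ s(b, c) := by
      intro hEq; rw [Sym2.eq_iff] at hEq; rcases hEq with ⟨h5, h6⟩ | ⟨h5, h6⟩ <;> simp_all
    have hne2 : s(c, d) ≠ s(b, c) := by
      intro hEq; rw [Sym2.eq_iff] at hEq; rcases hEq with ⟨h5, h6⟩ | ⟨h5, h6⟩ <;> simp_all
    exact key hdom hmin h2 h1 hne1 (by simp) h3 hne2 (by simp)
  · intro a p hp
    cases p with
    | nil => exact SimpleGraph.Walk.IsCycle.not_of_nil hp
    | @cons _ b _ hadj q =>
      have hQed : ∀ e ∈ (SimpleGraph.Walk.cons hadj q).edges, e ∈ Q := by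
        intro e he
        have h2 := (SimpleGraph.Walk.cons hadj q).edges_subset_edgeSet he
        rw [SimpleGraph.edgeSet_fromEdgeSet] at h2
        exact h2.1
      have hnodup := hp.edges_nodup
      rw [SimpleGraph.Walk.edges_cons, List.nodup_cons] at hnodup
      obtain ⟨hnotmem, _⟩ := hnodup
      -- last edge: contains a, lies in q.edges
      obtain ⟨elast, helast, halast⟩ := walk_end_mem_edge q hadj.ne.symm
      cases q with
      | nil => exact hadj.ne rfl
      | @cons _ c _ hadj2 q' =>
        -- second edge s(b, c)
        have hsec : s(b, c) ∈ (SimpleGraph.Walk.cons hadj2 q').edges := by simp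
        refine key hdom hmin (hQed s(a, b) (by simp)) (hQed elast (by rw [SimpleGraph.Walk.edges_cons]; exact List.mem_cons_of_mem _ helast))
          (fun h => hnotmem (h ▸ helast)) halast
          (hQed s(b, c) (by simp)) (fun h => hnotmem (h ▸ hsec)) (by simp)
end

section
/- Let G be a graph and let (S, M) be a pair where S is a vertex cover of G containing no isolated vertices of G, and M is a matching in G with V(M) ⊆ S. Then there exists an edge dominating set Q of G with |Q| ≤ |M| + |S \ V(M)|. -/
/-- If `S` is a vertex cover of `G` containing no isolated vertices of `G` and `M` is a
matching in `G` with `V(M) ⊆ S`, then `G` has an edge dominating set `Q` with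
`|Q| ≤ |M| + |S \ V(M)|`. -/
theorem stmt13 (V : Type) [Fintype V] [DecidableEq V] (G : SimpleGraph V)
    (S : Finset V) (M : Finset (Sym2 V))
    (hcover : ∀ e ∈ G.edgeSet, ∃ v ∈ S, v ∈ e)
    (hiso : ∀ v ∈ S, ∃ w : V, G.Adj v w)
    (hM : ↑M ⊆ G.edgeSet)
    (hmatch : ∀ e ∈ M, ∀ f ∈ M, e ≠ f → ∀ v : V, v ∈ e → v ∉ f)
    (hMS : ∀ e ∈ M, ∀ v : V, v ∈ e → v ∈ S) :
    ∃ Q : Finset (Sym2 V), ↑Q ⊆ G.edgeSet ∧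
      (∀ e ∈ G.edgeSet, ∃ f ∈ Q, ∃ v : V, v ∈ e ∧ v ∈ f) ∧
      Q.card ≤ M.card + (S \ Finset.univ.filter (fun v => ∃ e ∈ M, v ∈ e)).card := by
  classical
  set T := S \ Finset.univ.filter (fun v => ∃ e ∈ M, v ∈ e) with hT
  let g : V → Sym2 V := fun v =>
    if h : ∃ w, G.Adj v w then s(v, h.choose) else s(v, v)
  have hg : ∀ v ∈ T, g v ∈ G.edgeSet ∧ v ∈ g v := by
    intro v hv
    have hvS : v ∈ S := (Finset.mem_sdiff.mp hv).1
    have h : ∃ w, G.Adj v w := hiso v hvS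
    simp only [g, dif_pos h]
    exact ⟨h.choose_spec, by simp⟩
  refine ⟨M ∪ T.image g, ?_, ?_, ?_⟩
  · intro e he
    rcases Finset.mem_union.mp he with h | h
    · exact hM h
    · rcases Finset.mem_image.mp h with ⟨v, hv, rfl⟩
      exact (hg v hv).1
  · intro e he
    obtain ⟨v, hvS, hve⟩ := hcover e he
    by_cases hvM : ∃ f ∈ M, v ∈ f
    · obtain ⟨f, hf, hvf⟩ := hvM
      exact ⟨f, Finset.mem_union_left _ hf, v, hve, hvf⟩
    · have hvT : v ∈ T := Finset.mem_sdiff.mpr ⟨hvS, by simp [hvM]⟩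
      exact ⟨g v, Finset.mem_union_right _ (Finset.mem_image_of_mem g hvT),
        v, hve, (hg v hvT).2⟩
  · calc (M ∪ T.image g).card ≤ M.card + (T.image g).card := Finset.card_union_le _ _
      _ ≤ M.card + T.card := by gcongr; exact Finset.card_image_le
end
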